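/- For the Vietoris–Rips complex at scale $\varepsilon/2$ on a finite metric space $X$ partitioned into sets $U_j$, the subcomplexes $\mathrm{VR}_{\varepsilon/2}(T_\varepsilon U_j)$ form a cover of $\mathrm{VR}_{\varepsilon/2}(X)$ by subcomplexes, and each intersection $\bigcap_{j \in J} \mathrm{VR}_{\varepsilon/2}(T_\varepsilon U_j)$ equals $\mathrm{VR}_{\varepsilon/2}(\bigcap_{j \in J} T_\varepsilon U_j)$. -/
import Mathlib


/-- The `ε`-tubular neighbourhood of `S` within `X`:
`T_ε S = {x ∈ X : d(x, S) < ε}`. -/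
def Tub {α : Type} [MetricSpace α] (X S : Set α) (ε : ℝ) : Set α :=
  {x ∈ X | ∃ u ∈ S, dist x u < ε}

/-- The Vietoris–Rips complex at scale `δ` on `S`: the simplices are the
nonempty finite subsets of `S` of diameter at most `δ`. -/
def VR {α : Type} [MetricSpace α] (δ : ℝ) (S : Set α) : Set (Finset α) :=
  {σ | σ.Nonempty ∧ ↑σ ⊆ S ∧ ∀ x ∈ σ, ∀ y ∈ σ, dist x y ≤ δ}

/-- **Vietoris–Rips complexes of tubular neighbourhoods cover and intersect
well.**  For a finite metric space `X` partitioned into sets `U j`, the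
subcomplexes `VR_{ε/2}(T_ε (U j))` cover `VR_{ε/2}(X)`, and each intersection
`⋂_{j ∈ J} VR_{ε/2}(T_ε (U j))` equals `VR_{ε/2}(⋂_{j ∈ J} T_ε (U j))`. -/
theorem stmt_12 {α ι : Type} [MetricSpace α] (ε : ℝ) (hε : 0 < ε)
    (X : Set α) (hXfin : X.Finite)
    (U : ι → Set α)
    (hpart : ∀ x ∈ X, ∃! j, x ∈ U j) (hUX : ∀ j, U j ⊆ X) :
    (∀ σ ∈ VR (ε / 2) X, ∃ j, σ ∈ VR (ε / 2) (Tub X (U j) ε)) ∧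
    (∀ J : Set ι, J.Nonempty →
      {σ : Finset α | ∀ j ∈ J, σ ∈ VR (ε / 2) (Tub X (U j) ε)} =
        VR (ε / 2) (⋂ j ∈ J, Tub X (U j) ε)) := by
  constructor
  · rintro σ ⟨⟨x, hx⟩, hsub, hdiam⟩
    have hxX : x ∈ X := hsub hx
    obtain ⟨j, hj, -⟩ := hpart x hxX
    refine ⟨j, ⟨x, hx⟩, ?_, hdiam⟩
    intro y hy
    refine ⟨hsub hy, x, hj, ?_⟩
    calc dist y x ≤ ε / 2 := hdiam y hy x hx
      _ < ε := by linarith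
  · rintro J ⟨j₀, hj₀⟩
    ext σ
    constructor
    · intro h
      obtain ⟨hne, hsub, hdiam⟩ := h j₀ hj₀
      refine ⟨hne, ?_, hdiam⟩
      intro y hy
      simp only [Set.mem_iInter]
      exact fun j hj => (h j hj).2.1 hy
    · rintro ⟨hne, hsub, hdiam⟩ j hj
      refine ⟨hne, ?_, hdiam⟩
      intro y hy
      have := hsub hy
      simp only [Set.mem_iInter] at this
      exact this j hj
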